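/- Let (X,S) be an association scheme with intersection numbers λ_{ijk} and valencies δ_i. If s_j is a symmetric relation distinct from the identity relation, s_i ≠ s_j, and δ_i > 1, then λ_{iji}·δ_i is even. -/

import Mathlib

open Finset

/-- In an association scheme (X,S) with identity relation `one`, converse map `star`,
intersection numbers `lam` and valencies `val`: if s_j is symmetric, s_j ≠ 1_X,
s_i ≠ s_j and the valency of s_i is greater than 1, then λ_{iji}·δ_i is even. -/
theorem stmt_1 {X I : Type*} [Fintype X] [DecidableEq X]
    (s : I → X → X → Prop) [∀ i, DecidableRel (s i)]
    (one : I) (star : I → I)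
    (hpart : ∀ x y : X, ∃! i : I, s i x y)
    (hid : ∀ x y : X, s one x y ↔ x = y)
    (hconv : ∀ i (x y : X), s (star i) x y ↔ s i y x)
    (lam : I → I → I → ℕ)
    (hlam : ∀ i j k (x y : X), s k x y →
      ((univ : Finset X).filter (fun z => s i x z ∧ s j z y)).card = lam i j k)
    (val : I → ℕ) (hval : ∀ i, val i = lam i (star i) one)
    (i j : I) (hnonempty : ∃ x y : X, s i x y)
    (hsym : star j = j) (hj : j ≠ one) (hij : i ≠ j) (hvi : 1 < val i) :
    Even (lam i j i * val i) := by
  obtain ⟨x, y₀, hxy₀⟩ := hnonempty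
  -- s j is symmetric
  have hjsymm : ∀ a b : X, s j a b → s j b a := by
    intro a b h
    rw [← hsym, hconv]; exact h
  -- s j is irreflexive
  have hjirr : ∀ a : X, ¬ s j a a := by
    intro a h
    exact hj ((hpart a a).unique h ((hid a a).mpr rfl))
  -- the graph on X : neighbors of x under s i, joined by s j
  let G : SimpleGraph X :=
    { Adj := fun a b => s i x a ∧ s i x b ∧ s j a b
      symm := by
        constructor; intro a b ⟨ha, hb, hab⟩
        exact ⟨hb, ha, hjsymm _ _ hab⟩
      loopless := by
        constructor; intro a ⟨_, _, h⟩
        exact hjirr a h }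
  haveI hdec : DecidableRel G.Adj := fun a b => instDecidableAnd
  -- degree computation
  have hdeg : ∀ a : X, G.degree a =
      ((univ : Finset X).filter (fun b => s i x a ∧ s i x b ∧ s j a b)).card := by
    intro a
    rw [← SimpleGraph.card_neighborFinset_eq_degree]
    congr 1
    ext b
    simp [SimpleGraph.neighborFinset, SimpleGraph.neighborSet, G, Set.mem_toFinset]
    exact Set.mem_toFinset
  -- val i is the number of z with s i x z
  have hN : ((univ : Finset X).filter (fun z => s i x z)).card = val i := by
    rw [hval, ← hlam i (star i) one x x ((hid x x).mpr rfl)]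
    congr 1
    ext z
    simp only [mem_filter, mem_univ, true_and]
    constructor
    · intro h; exact ⟨h, (hconv i z x).mpr h⟩
    · intro ⟨h, _⟩; exact h
  -- sum of degrees equals lam i j i * val i
  have hsum : ∑ a : X, G.degree a
      = lam i j i * val i := by
    rw [← sum_filter_add_sum_filter_not (univ : Finset X) (fun a => s i x a)]
    have h2 : ∑ a ∈ (univ : Finset X).filter (fun a => ¬ s i x a),
        G.degree a = 0 := by
      apply sum_eq_zero
      intro a ha
      simp only [mem_filter] at ha
      rw [hdeg a]
      apply card_eq_zero.mpr
      apply filter_eq_empty_iff.mpr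
      intro b _ hb
      exact ha.2 hb.1
    rw [h2, add_zero]
    have h1 : ∀ a ∈ (univ : Finset X).filter (fun a => s i x a),
        G.degree a = lam i j i := by
      intro a ha
      simp only [mem_filter] at ha
      rw [hdeg a, ← hlam i j i x a ha.2]
      congr 1
      ext b
      simp only [mem_filter, mem_univ, true_and]
      constructor
      · intro ⟨_, hb, hab⟩; exact ⟨hb, hjsymm _ _ hab⟩
      · intro ⟨hb, hba⟩; exact ⟨ha.2, hb, hjsymm _ _ hba⟩
    rw [sum_congr rfl h1, sum_const, hN, smul_eq_mul, mul_comm]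
  rw [← hsum, SimpleGraph.sum_degrees_eq_twice_card_edges]
  exact even_two_mul _
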